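/- Let V be a finite-dimensional vector space over a field equipped with a (possibly degenerate on subspaces) non-degenerate reflexive sesquilinear form f, and let U ≤ V be a subspace with dim U = l. Then there exists a subspace W ≤ U such that the restriction of f to W is non-degenerate and dim W ≥ 2l - dim V. -/

import Mathlib

open Module

noncomputable def semilinearEquivPi (K M : Type*) [Field K] [AddCommGroup M] [Module K M]
    [FiniteDimensional K M] (σ : K →+* K) :
    (M →ₛₗ[σ] K) ≃ₗ[K] (Fin (finrank K M) → K) where
  toFun f i := f (finBasis K M i)
  map_add' f g := rfl
  map_smul' c f := rfl
  invFun a :=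
    { toFun := fun x => ∑ i, σ ((finBasis K M).repr x i) * a i
      map_add' := fun x y => by simp [map_add, add_mul, Finset.sum_add_distrib]
      map_smul' := fun c x => by simp [Finset.mul_sum, mul_assoc] }
  left_inv f := by
    ext x
    conv_rhs => rw [← (finBasis K M).sum_repr x]
    rw [map_sum]
    simp [LinearMap.map_smulₛₗ, smul_eq_mul]
  right_inv a := by
    ext i
    simp [Basis.repr_self, Finsupp.single_apply, apply_ite]

lemma finrank_semilinear (K M : Type*) [Field K] [AddCommGroup M] [Module K M]
    [FiniteDimensional K M] (σ : K →+* K) :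
    finrank K (M →ₛₗ[σ] K) = finrank K M := by
  rw [(semilinearEquivPi K M σ).finrank_eq, finrank_fin_fun]

instance fd_semilinear (K M : Type*) [Field K] [AddCommGroup M] [Module K M]
    [FiniteDimensional K M] (σ : K →+* K) : FiniteDimensional K (M →ₛₗ[σ] K) :=
  Module.Finite.equiv (semilinearEquivPi K M σ).symm

noncomputable def restrictMap {K V : Type*} [Field K] [AddCommGroup V] [Module K V]
    (U : Submodule K V) (σ : K →+* K) :
    (V →ₛₗ[σ] K) →ₗ[K] (U →ₛₗ[σ] K) where
  toFun f := f.domRestrict U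
  map_add' _ _ := rfl
  map_smul' _ _ := rfl

lemma restrictMap_surjective {K V : Type*} [Field K] [AddCommGroup V] [Module K V]
    (U : Submodule K V) (σ : K →+* K) :
    Function.Surjective (restrictMap U σ) := by
  obtain ⟨U', hU'⟩ := Submodule.exists_isCompl U
  intro g
  refine ⟨g.comp (U.linearProjOfIsCompl U' hU'), ?_⟩
  ext ⟨u, hu⟩
  exact congrArg g (Submodule.linearProjOfIsCompl_apply_left hU' ⟨u, hu⟩)

theorem exists_nonsingular_subspace {K V : Type*} [Field K] [AddCommGroup V] [Module K V]
    [FiniteDimensional K V] {σ : K →+* K}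
    (B : V →ₗ[K] V →ₛₗ[σ] K) (hrefl : B.IsRefl) (hnd : B.SeparatingLeft)
    (U : Submodule K V) (l : ℕ) (hl : Module.finrank K U = l) :
    ∃ W : Submodule K V, W ≤ U ∧ (B.domRestrict₁₂ W W).SeparatingLeft ∧
      2 * (l : ℤ) - (Module.finrank K V : ℤ) ≤ (Module.finrank K W : ℤ) := by
  set n := finrank K V with hn
  -- the map v ↦ (B v restricted to U)
  set h : V →ₗ[K] (U →ₛₗ[σ] K) := (restrictMap U σ).comp B with hh
  -- B is injective hence surjective
  have hBinj : Function.Injective B := by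
    rw [← LinearMap.ker_eq_bot]
    rw [LinearMap.separatingLeft_iff_ker_eq_bot] at hnd
    exact hnd
  have hBsurj : Function.Surjective B := by
    have h1 : finrank K (LinearMap.range B) = finrank K (V →ₛₗ[σ] K) := by
      rw [LinearMap.finrank_range_of_inj hBinj, finrank_semilinear]
    rw [← LinearMap.range_eq_top]
    exact Submodule.eq_top_of_finrank_eq h1
  have hhsurj : Function.Surjective h := by
    rw [hh, LinearMap.coe_comp]
    exact (restrictMap_surjective U σ).comp hBsurj
  -- rank-nullity for h
  have hrank : finrank K (LinearMap.range h) + finrank K (LinearMap.ker h) = n :=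
    LinearMap.finrank_range_add_finrank_ker h
  have hrange : finrank K (LinearMap.range h) = l := by
    rw [LinearMap.range_eq_top.mpr hhsurj, finrank_top, finrank_semilinear, hl]
  -- the radical
  set R : Submodule K V := U ⊓ U.orthogonalBilin B with hR
  have hRker : R ≤ LinearMap.ker h := by
    rintro v ⟨hvU, hvO⟩
    rw [LinearMap.mem_ker]
    ext ⟨u, hu⟩
    exact hrefl u v (hvO u hu)
  have hRdim : finrank K R ≤ finrank K (LinearMap.ker h) := Submodule.finrank_mono hRker
  -- complement of the radical inside U
  set R' : Submodule K U := R.comap U.subtype with hR'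
  obtain ⟨W', hW'⟩ := Submodule.exists_isCompl R'
  have hdimsum : finrank K R' + finrank K W' = l := by
    rw [Submodule.finrank_add_eq_of_isCompl hW', hl]
  have hR'R : finrank K R' = finrank K R := by
    have : R ≤ U := inf_le_left
    exact (Submodule.comapSubtypeEquivOfLe this).finrank_eq
  refine ⟨W'.map U.subtype, Submodule.map_subtype_le U W', ?_, ?_⟩
  · -- nondegeneracy
    rintro ⟨x, hx⟩ hortho
    obtain ⟨⟨x', hx'U⟩, hx'W, rfl⟩ := hx
    have hxR : (x' : V) ∈ R := by
      refine ⟨hx'U, fun u hu => ?_⟩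
      -- decompose u
      have : (⟨u, hu⟩ : U) ∈ R' ⊔ W' := by rw [hW'.codisjoint.eq_top]; trivial
      obtain ⟨r, hr, w, hw, hrw⟩ := Submodule.mem_sup.mp this
      have h1 : B x' (r : V) = 0 := by
        have := hr.2  -- r ∈ orthogonalBilin
        exact this x' hx'U
      have h2 : B x' (w : V) = 0 := by
        have := hortho ⟨(w : V), Submodule.mem_map_of_mem hw⟩
        exact this
      have hu' : u = (r : V) + (w : V) := by
        have := congrArg (Submodule.subtype U) hrw
        simpa using this.symm
      have : B x' u = 0 := by rw [hu', map_add, h1, h2, add_zero]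
      exact hrefl x' u this
    have : (⟨x', hx'U⟩ : U) ∈ R' ⊓ W' := ⟨hxR, hx'W⟩
    rw [hW'.disjoint.eq_bot] at this
    simp only [Submodule.mem_bot] at this
    simp [this]
  · -- dimension bound
    have hWdim : finrank K (W'.map U.subtype) = finrank K W' :=
      Submodule.finrank_map_subtype_eq U W'
    rw [hWdim]
    omega
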